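/- For f: ℝ² → ℝ, f(x,y) = ((x² + y²)^(3/2)) (i.e., f(x,y) = √((x²+y²)³)) and λ > 0, the proximal operator of λf is given by prox_{λf}(x,y) = (c·x, c·y) where c = 2/(1 + √(1 + 12λ√(x² + y²))). That is, (c·x, c·y) is the unique minimizer of u ↦ f(u) + (1/(2λ))‖u - (x,y)‖². -/

import Mathlib

open Real RealInnerProductSpace

lemma sqrt_cube (a : ℝ) (ha : 0 ≤ a) : Real.sqrt (a ^ 3) = Real.sqrt a ^ 3 := by
  have h2 : Real.sqrt a ^ 2 = a := Real.sq_sqrt ha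
  have h6 : (Real.sqrt a ^ 3) ^ 2 = a ^ 3 := by
    rw [← pow_mul, show 3 * 2 = 2 * 3 by ring, pow_mul, h2]
  rw [← h6, Real.sqrt_sq (by positivity)]

lemma norm_sqrt_eq (u : EuclideanSpace ℝ (Fin 2)) :
    Real.sqrt ((u 0) ^ 2 + (u 1) ^ 2) = ‖u‖ := by
  rw [EuclideanSpace.norm_eq]
  simp [Fin.sum_univ_two, Real.norm_eq_abs, sq_abs]

lemma key_ineq (lam r s t k : ℝ) (hlam : 0 < lam) (hk : 2 * lam * k = 1)
    (hs : 0 ≤ s) (ht : 0 ≤ t) (hrt : 3 * lam * t ^ 2 + t = r) :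
    t ^ 3 + k * (t - r) ^ 2 ≤ s ^ 3 + k * (s - r) ^ 2 := by
  have hk0 : 0 < k := by nlinarith
  nlinarith [sq_nonneg (s - t), mul_nonneg hk0.le (sq_nonneg (s - t)),
    mul_nonneg (sq_nonneg (s - t)) hs, mul_nonneg (sq_nonneg (s - t)) ht]

lemma key_eq (lam r s t k : ℝ) (hlam : 0 < lam) (hk : 2 * lam * k = 1)
    (hs : 0 ≤ s) (ht : 0 ≤ t) (hrt : 3 * lam * t ^ 2 + t = r)
    (heq : s ^ 3 + k * (s - r) ^ 2 ≤ t ^ 3 + k * (t - r) ^ 2) :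
    s = t := by
  have hk0 : 0 < k := by nlinarith
  by_contra hne
  have h1 : 0 < (s - t) ^ 2 := (sq_nonneg _).lt_of_ne (Ne.symm (pow_ne_zero 2 (sub_ne_zero.mpr hne)))
  nlinarith [mul_pos hk0 h1, mul_nonneg (sq_nonneg (s - t)) hs,
    mul_nonneg (sq_nonneg (s - t)) ht]

set_option maxHeartbeats 1000000 in
/-- The proximal operator of `λ f` for `f(x,y) = √((x²+y²)³)` is
`prox_{λf}(x,y) = (c x, c y)` with `c = 2/(1 + √(1 + 12 λ √(x²+y²)))`:
this point is the unique minimizer of `u ↦ f u + (1/(2λ))‖u - (x,y)‖²`. -/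
theorem prox_of_norm_cubed (lam : ℝ) (hlam : 0 < lam) (p : EuclideanSpace ℝ (Fin 2)) :
    let f : EuclideanSpace ℝ (Fin 2) → ℝ := fun u => Real.sqrt (((u 0) ^ 2 + (u 1) ^ 2) ^ 3)
    let c : ℝ := 2 / (1 + Real.sqrt (1 + 12 * lam * Real.sqrt ((p 0) ^ 2 + (p 1) ^ 2)))
    (∀ u, f (c • p) + 1 / (2 * lam) * ‖c • p - p‖ ^ 2 ≤ f u + 1 / (2 * lam) * ‖u - p‖ ^ 2) ∧
      (∀ u, (∀ w, f u + 1 / (2 * lam) * ‖u - p‖ ^ 2 ≤ f w + 1 / (2 * lam) * ‖w - p‖ ^ 2) →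
        u = c • p) := by
  intro f c
  have hf : ∀ u : EuclideanSpace ℝ (Fin 2), f u = ‖u‖ ^ 3 := by
    intro u
    show Real.sqrt (((u 0) ^ 2 + (u 1) ^ 2) ^ 3) = ‖u‖ ^ 3
    rw [sqrt_cube _ (by positivity), norm_sqrt_eq]
  set r : ℝ := ‖p‖ with hrdef
  have hr0 : 0 ≤ r := norm_nonneg p
  set d : ℝ := Real.sqrt (1 + 12 * lam * r) with hddef
  have hcval : c = 2 / (1 + d) := by
    show (2 : ℝ) / (1 + Real.sqrt (1 + 12 * lam * Real.sqrt ((p 0) ^ 2 + (p 1) ^ 2))) = _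
    rw [norm_sqrt_eq]
  have hd2 : d ^ 2 = 1 + 12 * lam * r := Real.sq_sqrt (by positivity)
  have hd0 : 0 ≤ d := Real.sqrt_nonneg _
  have hd1 : 1 ≤ d := by nlinarith [mul_nonneg hlam.le hr0]
  have hc0 : 0 ≤ c := by rw [hcval]; positivity
  have hc1 : c ≤ 1 := by
    rw [hcval, div_le_one (by linarith)]; linarith
  set t : ℝ := c * r with htdef
  have ht0 : 0 ≤ t := mul_nonneg hc0 hr0
  have hrt : 3 * lam * t ^ 2 + t = r := by
    rw [htdef, hcval]
    field_simp
    linear_combination (-(1 + d) * r + r * d) * hd2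
  have hk : 2 * lam * (1 / (2 * lam)) = 1 := by field_simp
  have hkpos : 0 < 1 / (2 * lam) := by positivity
  -- value at c • p
  have hnormcp : ‖c • p‖ = t := by
    rw [norm_smul, Real.norm_eq_abs, abs_of_nonneg hc0]
  have hnormcpp : ‖c • p - p‖ = (1 - c) * r := by
    have h : c • p - p = (c - 1) • p := by rw [sub_smul, one_smul]
    rw [h, norm_smul, Real.norm_eq_abs, abs_of_nonpos (by linarith)]
    ring
  have hval : f (c • p) + 1 / (2 * lam) * ‖c • p - p‖ ^ 2
      = t ^ 3 + 1 / (2 * lam) * (t - r) ^ 2 := by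
    rw [hf, hnormcp, hnormcpp]
    have h : ((1 - c) * r) ^ 2 = (t - r) ^ 2 := by rw [htdef]; ring
    rw [h]
  have hlow : ∀ u : EuclideanSpace ℝ (Fin 2),
      t ^ 3 + 1 / (2 * lam) * (t - r) ^ 2 ≤ f u + 1 / (2 * lam) * ‖u - p‖ ^ 2 := by
    intro u
    have hcs : (‖u‖ - r) ^ 2 ≤ ‖u - p‖ ^ 2 := by
      have h1 : ‖u - p‖ ^ 2 = ‖u‖ ^ 2 - 2 * ⟪u, p⟫ + ‖p‖ ^ 2 := norm_sub_sq_real u p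
      have h2 : ⟪u, p⟫ ≤ ‖u‖ * ‖p‖ := real_inner_le_norm u p
      nlinarith
    have hki := key_ineq lam r ‖u‖ t (1 / (2 * lam)) hlam hk (norm_nonneg u) ht0 hrt
    rw [hf]
    linarith [mul_le_mul_of_nonneg_left hcs hkpos.le, hki]
  refine ⟨fun u => by rw [hval]; exact hlow u, ?_⟩
  intro u hu
  have hle : f u + 1 / (2 * lam) * ‖u - p‖ ^ 2 ≤ t ^ 3 + 1 / (2 * lam) * (t - r) ^ 2 := by
    rw [← hval]; exact hu (c • p)
  have heq2 : f u + 1 / (2 * lam) * ‖u - p‖ ^ 2 = t ^ 3 + 1 / (2 * lam) * (t - r) ^ 2 :=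
    le_antisymm hle (hlow u)
  rw [hf] at heq2
  have hcs : (‖u‖ - r) ^ 2 ≤ ‖u - p‖ ^ 2 := by
    have h1 : ‖u - p‖ ^ 2 = ‖u‖ ^ 2 - 2 * ⟪u, p⟫ + ‖p‖ ^ 2 := norm_sub_sq_real u p
    have h2 : ⟪u, p⟫ ≤ ‖u‖ * ‖p‖ := real_inner_le_norm u p
    nlinarith
  have hmid : ‖u‖ ^ 3 + 1 / (2 * lam) * (‖u‖ - r) ^ 2
      ≤ t ^ 3 + 1 / (2 * lam) * (t - r) ^ 2 := by
    linarith [mul_le_mul_of_nonneg_left hcs hkpos.le]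
  have hst : ‖u‖ = t :=
    key_eq lam r ‖u‖ t (1 / (2 * lam)) hlam hk (norm_nonneg u) ht0 hrt hmid
  have hnsq : ‖u - p‖ ^ 2 = (t - r) ^ 2 := by
    rw [hst] at heq2
    have h3 : 1 / (2 * lam) * ‖u - p‖ ^ 2 = 1 / (2 * lam) * (t - r) ^ 2 := by linarith
    exact mul_left_cancel₀ (ne_of_gt hkpos) h3
  have hinner : ⟪u, p⟫ = ‖u‖ * ‖p‖ := by
    have h1 : ‖u - p‖ ^ 2 = ‖u‖ ^ 2 - 2 * ⟪u, p⟫ + ‖p‖ ^ 2 := norm_sub_sq_real u p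
    rw [hnsq, hst, ← hrdef] at h1
    rw [hst, ← hrdef]
    linear_combination (1 / 2 : ℝ) * h1
  have hpar : ‖p‖ • u = ‖u‖ • p := inner_eq_norm_mul_iff_real.mp hinner
  rcases eq_or_lt_of_le hr0 with hr | hr
  · have hp0 : p = 0 := by
      rw [← norm_eq_zero, ← hrdef, ← hr]
    have ht00 : t = 0 := by rw [htdef, ← hr, mul_zero]
    have hu0 : u = 0 := by rw [← norm_eq_zero, hst, ht00]
    rw [hu0, hp0, smul_zero]
  · have h2 : r • u = t • p := by rw [← hst]; exact hpar
    have h4 : u = (r⁻¹ * t) • p := by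
      rw [mul_smul, ← h2, smul_smul, inv_mul_cancel₀ (ne_of_gt hr), one_smul]
    have hsc : r⁻¹ * t = c := by
      rw [htdef]; field_simp
    rw [h4, hsc]
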